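/- Let a, b, c be real numbers. For every twice continuously differentiable function f : ℝ → Mat₃(ℝ) and every x ∈ ℝ, setting g(y) = f(y)·T(y) with T(y) = [[1, ay, 0],[0,1,0],[0, cy, 1]], one has f''(x) + f'(x)·F₁(x) + f(x)·F₀ = ( g''(x) + g'(x)·diag(2b-2x, -2x, -2x) + g(x)·diag(0, 2, 0) ) · T(x)⁻¹, where T(x)⁻¹ = [[1, -ax, 0],[0,1,0],[0, -cx, 1]]. That is, D₁ = T·diag(∂²+∂(-2x+2b), ∂²+∂(-2x)+2, ∂²+∂(-2x))·T⁻¹. -/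

import Mathlib

open Matrix

/-- The polynomial matrix T(x). -/
noncomputable def T (a c : ℝ) (x : ℝ) : Matrix (Fin 3) (Fin 3) ℝ :=
  !![1, a * x, 0; 0, 1, 0; 0, c * x, 1]

/-- The inverse T(x)⁻¹. -/
noncomputable def Tinv (a c : ℝ) (x : ℝ) : Matrix (Fin 3) (Fin 3) ℝ :=
  !![1, -a * x, 0; 0, 1, 0; 0, -c * x, 1]

/-- First-order coefficient of the operator D₁. -/
noncomputable def F1 (a b c : ℝ) (x : ℝ) : Matrix (Fin 3) (Fin 3) ℝ :=
  !![2 * b - 2 * x, -2 * a * b * x + 2 * a, 0;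
     0, -2 * x, 0;
     0, 2 * c, -2 * x]

/-- Zeroth-order coefficient of the operator D₁. -/
noncomputable def F0 : Matrix (Fin 3) (Fin 3) ℝ :=
  !![0, 0, 0; 0, 2, 0; 0, 0, 0]

/-- Entrywise derivative of a matrix-valued function. -/
noncomputable def mderiv (f : ℝ → Matrix (Fin 3) (Fin 3) ℝ) (x : ℝ) :
    Matrix (Fin 3) (Fin 3) ℝ :=
  Matrix.of fun i j => deriv (fun y => f y i j) x

/-- the conjugation formula
D₁ = T·diag(∂²+∂(-2x+2b), ∂²+∂(-2x)+2, ∂²+∂(-2x))·T⁻¹: for every C²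
matrix-valued function f, with g(y) = f(y)·T(y),
f''(x) + f'(x)·F₁(x) + f(x)·F₀
  = (g''(x) + g'(x)·diag(2b-2x, -2x, -2x) + g(x)·diag(0,2,0))·T(x)⁻¹. -/
theorem D1_conjugated (a b c : ℝ) (f : ℝ → Matrix (Fin 3) (Fin 3) ℝ)
    (hf : ∀ i j, ContDiff ℝ 2 (fun x => f x i j))
    (g : ℝ → Matrix (Fin 3) (Fin 3) ℝ) (hg : ∀ y, g y = f y * T a c y) (x : ℝ) :
    mderiv (mderiv f) x + mderiv f x * F1 a b c x + f x * F0
      = (mderiv (mderiv g) x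
          + mderiv g x * Matrix.diagonal ![2 * b - 2 * x, -2 * x, -2 * x]
          + g x * Matrix.diagonal ![0, 2, 0]) * Tinv a c x := by
  have hdf : ∀ i j, Differentiable ℝ (fun y => f y i j) := fun i j =>
    (hf i j).differentiable (by norm_num)
  have hdf' : ∀ i j, Differentiable ℝ (deriv (fun y => f y i j)) := fun i j => by
    have := (contDiff_succ_iff_deriv.mp
      (show ContDiff ℝ (1+1) (fun y => f y i j) by norm_num; exact hf i j)).2.2
    exact this.differentiable (by norm_num)
  -- entries of g
  have hg0 : ∀ i, (fun y => g y i 0) = fun y => f y i 0 := fun i => funext fun y => by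
    rw [hg]
    simp only [T, Matrix.mul_apply, Fin.sum_univ_three, Matrix.cons_val', Matrix.cons_val_zero,
      Matrix.cons_val_one, Matrix.head_cons, Matrix.empty_val', Matrix.cons_val_fin_one,
      Matrix.head_fin_const, Matrix.of_apply, Matrix.cons_val_two, Matrix.tail_cons, Matrix.cons_val_succ,
      Matrix.vecHead, Matrix.vecTail, Function.comp]
    ring
  have hg1 : ∀ i, (fun y => g y i 1)
      = fun y => f y i 0 * (a * y) + f y i 1 + f y i 2 * (c * y) := fun i => funext fun y => by
    rw [hg]
    simp only [T, Matrix.mul_apply, Fin.sum_univ_three, Matrix.cons_val', Matrix.cons_val_zero,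
      Matrix.cons_val_one, Matrix.head_cons, Matrix.empty_val', Matrix.cons_val_fin_one,
      Matrix.head_fin_const, Matrix.of_apply, Matrix.cons_val_two, Matrix.tail_cons, Matrix.cons_val_succ,
      Matrix.vecHead, Matrix.vecTail, Function.comp]
    ring
  have hg2 : ∀ i, (fun y => g y i 2) = fun y => f y i 2 := fun i => funext fun y => by
    rw [hg]
    simp only [T, Matrix.mul_apply, Fin.sum_univ_three, Matrix.cons_val', Matrix.cons_val_zero,
      Matrix.cons_val_one, Matrix.head_cons, Matrix.empty_val', Matrix.cons_val_fin_one,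
      Matrix.head_fin_const, Matrix.of_apply, Matrix.cons_val_two, Matrix.tail_cons, Matrix.cons_val_succ,
      Matrix.vecHead, Matrix.vecTail, Function.comp]
    ring
  have Ha : ∀ y : ℝ, HasDerivAt (fun t : ℝ => a * t) a y := fun y => by
    simpa using (hasDerivAt_id y).const_mul a
  have Hc : ∀ y : ℝ, HasDerivAt (fun t : ℝ => c * t) c y := fun y => by
    simpa using (hasDerivAt_id y).const_mul c
  -- first derivatives of g entries
  have dg0 : ∀ (i : Fin 3) (y : ℝ), deriv (fun t => g t i 0) y = deriv (fun t => f t i 0) y :=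
    fun i y => by rw [hg0]
  have dg2 : ∀ (i : Fin 3) (y : ℝ), deriv (fun t => g t i 2) y = deriv (fun t => f t i 2) y :=
    fun i y => by rw [hg2]
  have dg1 : ∀ (i : Fin 3) (y : ℝ), deriv (fun t => g t i 1) y
      = deriv (fun t => f t i 0) y * (a * y) + f y i 0 * a
        + deriv (fun t => f t i 1) y
        + deriv (fun t => f t i 2) y * (c * y) + f y i 2 * c := fun i y => by
    rw [hg1]
    have H := ((((hdf i 0 y).hasDerivAt.mul (Ha y)).add (hdf i 1 y).hasDerivAt).add
      ((hdf i 2 y).hasDerivAt.mul (Hc y)))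
    exact H.deriv.trans (by ring)
  -- second derivatives of g entries
  have ddg0 : ∀ i : Fin 3, deriv (fun y => deriv (fun t => g t i 0) y) x
      = deriv (fun y => deriv (fun t => f t i 0) y) x := fun i => by
    have : (fun y => deriv (fun t => g t i 0) y) = fun y => deriv (fun t => f t i 0) y :=
      funext fun y => dg0 i y
    rw [this]
  have ddg2 : ∀ i : Fin 3, deriv (fun y => deriv (fun t => g t i 2) y) x
      = deriv (fun y => deriv (fun t => f t i 2) y) x := fun i => by
    have : (fun y => deriv (fun t => g t i 2) y) = fun y => deriv (fun t => f t i 2) y :=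
      funext fun y => dg2 i y
    rw [this]
  have ddg1 : ∀ i : Fin 3, deriv (fun y => deriv (fun t => g t i 1) y) x
      = deriv (fun y => deriv (fun t => f t i 0) y) x * (a * x)
        + 2 * (deriv (fun t => f t i 0) x * a)
        + deriv (fun y => deriv (fun t => f t i 1) y) x
        + deriv (fun y => deriv (fun t => f t i 2) y) x * (c * x)
        + 2 * (deriv (fun t => f t i 2) x * c) := fun i => by
    have hfun : (fun y => deriv (fun t => g t i 1) y)
        = fun y => deriv (fun t => f t i 0) y * (a * y) + f y i 0 * a
            + deriv (fun t => f t i 1) y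
            + deriv (fun t => f t i 2) y * (c * y) + f y i 2 * c :=
      funext fun y => dg1 i y
    rw [hfun]
    have H := (((((hdf' i 0 x).hasDerivAt.mul (Ha x)).add
      (((hdf i 0 x).hasDerivAt).mul_const a)).add
      (hdf' i 1 x).hasDerivAt).add
      ((hdf' i 2 x).hasDerivAt.mul (Hc x))).add
      (((hdf i 2 x).hasDerivAt).mul_const c)
    exact H.deriv.trans (by ring)
  have e0 : ∀ i : Fin 3, g x i 0 = f x i 0 := fun i => congrFun (hg0 i) x
  have e1 : ∀ i : Fin 3, g x i 1 = f x i 0 * (a * x) + f x i 1 + f x i 2 * (c * x) :=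
    fun i => congrFun (hg1 i) x
  have e2 : ∀ i : Fin 3, g x i 2 = f x i 2 := fun i => congrFun (hg2 i) x
  ext i j
  fin_cases j <;>
  · simp only [Fin.zero_eta, Fin.mk_one, show (⟨2, by omega⟩ : Fin 3) = 2 from rfl,
      Matrix.add_apply, Matrix.mul_apply, Fin.sum_univ_three, F1, F0, Tinv,
      Matrix.diagonal, Matrix.of_apply, Matrix.cons_val', Matrix.cons_val_zero,
      Matrix.cons_val_one, Matrix.head_cons, Matrix.head_fin_const, Matrix.empty_val',
      Matrix.cons_val_fin_one, Matrix.cons_val_two, Matrix.tail_cons, Matrix.cons_val_succ,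
      Matrix.vecHead, Matrix.vecTail, Function.comp, Fin.isValue, mderiv,
      Matrix.one_apply, if_true, if_false]
    simp only [show ((0:Fin 3) = 1) = False by decide, show ((0:Fin 3) = 2) = False by decide,
      show ((1:Fin 3) = 0) = False by decide, show ((1:Fin 3) = 2) = False by decide,
      show ((2:Fin 3) = 0) = False by decide, show ((2:Fin 3) = 1) = False by decide,
      if_false, if_true, ite_true, ite_false]
    simp only [ddg0, ddg1, ddg2]
    simp only [dg0, dg1, dg2, e0, e1, e2]
    ring
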